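/- Let n1,n2,α0,α1,α2 ∈ ℂ with n1·n2 = 4 and δ := 4α0 + 2n1α1 − (n1+2)α2 ≠ 0. Let U ⊆ ℂ be open with 0 ∉ U, and let x, y : ℂ → ℂ be differentiable on U with x(t) ≠ 0 for t ∈ U, satisfying the generalized Painlevé III system with parameters (n1,n2; α0,α1,α2) on U. Then the functions x̃(t) := t/x(t) and ỹ(t) := −x(t)·(x(t)·y(t)+α2)/t satisfy the generalized Painlevé III system on U with parameters (n2,n1; α1,α0,α2), provided the quantity δ formed from these new parameters is nonzero. -/

import Mathlib

/-- The constant `δ` of the generalized Painlevé III system. -/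
noncomputable def piiiDelta (n1 b0 b1 b2 : ℂ) : ℂ :=
  4 * b0 + 2 * n1 * b1 - (n1 + 2) * b2

/-- `x, y : ℂ → ℂ` are differentiable on `U` and satisfy the generalized
Painlevé III system with parameters `(n1,n2; b0,b1,b2)` on `U`. -/
def PIIISystem (n1 n2 b0 b1 b2 : ℂ) (U : Set ℂ) (x y : ℂ → ℂ) : Prop :=
  DifferentiableOn ℂ x U ∧ DifferentiableOn ℂ y U ∧
  ∀ t ∈ U,
    (piiiDelta n1 b0 b1 b2 * t * deriv x t =
      -(n1 + 2) * (x t) ^ 2 * y t + 2 * (x t) ^ 2 + 2 * (n1 * b1 - 2 * b2) * x t - n1 * t)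
    ∧
    (piiiDelta n1 b0 b1 b2 * t * deriv y t =
      4 * x t * (y t) ^ 2 - 4 * x t * y t - (2 * n1 * b1 + (n1 - 6) * b2) * y t - 2 * b2)

/-- Key algebraic identity for the first equation of the transformed system. -/
theorem piii_aux1 (n1 n2 a0 a1 a2 t X Y dx : ℂ)
    (hn1 : n1 ≠ 0) (ht0 : t ≠ 0) (hxt : X ≠ 0)
    (hrel : n1 * n2 = 4)
    (h1 : (4 * a0 + 2 * n1 * a1 - (n1 + 2) * a2) * t * dx =
      -(n1 + 2) * X ^ 2 * Y + 2 * X ^ 2 + 2 * (n1 * a1 - 2 * a2) * X - n1 * t) :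
    piiiDelta n2 a1 a0 a2 * t * ((1 * X - t * dx) / X ^ 2) =
      -(n2 + 2) * (t / X) ^ 2 * (-(X * (X * Y + a2)) / t) + 2 * (t / X) ^ 2
        + 2 * (n2 * a0 - 2 * a2) * (t / X) - n2 * t := by
  have e1 : -(n2 + 2) * (t / X) ^ 2 * (-(X * (X * Y + a2)) / t)
      = (n2 + 2) * t * (X * Y + a2) / X := by field_simp
  rw [e1]
  simp only [piiiDelta]
  field_simp
  apply mul_left_cancel₀ hn1
  linear_combination (-2) * h1 +
    (-2 * a2 * X - (2 * a0 - a2) * t * dx - X ^ 2 * Y + X ^ 2) * hrel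

/-- Key algebraic identity for the second equation of the transformed system. -/
theorem piii_aux2 (n1 n2 a0 a1 a2 t X Y dx dy : ℂ)
    (hn1 : n1 ≠ 0) (ht0 : t ≠ 0) (hxt : X ≠ 0)
    (hrel : n1 * n2 = 4)
    (h1 : (4 * a0 + 2 * n1 * a1 - (n1 + 2) * a2) * t * dx =
      -(n1 + 2) * X ^ 2 * Y + 2 * X ^ 2 + 2 * (n1 * a1 - 2 * a2) * X - n1 * t)
    (h2 : (4 * a0 + 2 * n1 * a1 - (n1 + 2) * a2) * t * dy =
      4 * X * Y ^ 2 - 4 * X * Y - (2 * n1 * a1 + (n1 - 6) * a2) * Y - 2 * a2) :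
    piiiDelta n2 a1 a0 a2 * t *
        ((-(dx * (X * Y + a2) + X * (dx * Y + X * dy)) * t - -(X * (X * Y + a2)) * 1) / t ^ 2) =
      4 * (t / X) * (-(X * (X * Y + a2)) / t) ^ 2 - 4 * (t / X) * (-(X * (X * Y + a2)) / t)
        - (2 * n2 * a0 + (n2 - 6) * a2) * (-(X * (X * Y + a2)) / t) - 2 * a2 := by
  have e2a : 4 * (t / X) * (-(X * (X * Y + a2)) / t) ^ 2 = 4 * X * (X * Y + a2) ^ 2 / t := by
    field_simp
  have e2b : 4 * (t / X) * (-(X * (X * Y + a2)) / t) = -(4 * (X * Y + a2)) := by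
    field_simp
  rw [e2a, e2b]
  simp only [piiiDelta]
  field_simp
  apply mul_left_cancel₀ hn1
  linear_combination (-2 * (a2 + 2 * X * Y)) * h1 + (-2 * X ^ 2) * h2 +
    ((2 * a0 - a2) * (X ^ 2 * Y + a2 * X - t * dx * (2 * X * Y + a2) - t * X ^ 2 * dy)
      - (X * Y + a2) * (2 * a0 + a2) * X) * hrel

/-- Birational symmetry `π` of the generalized Painlevé III system:
`x̃(t) = t/x(t)`, `ỹ(t) = −x(t)·(x(t)·y(t)+α2)/t`, with parameters `(n2,n1; α1,α0,α2)`. -/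
theorem piii_symmetry_pi (n1 n2 a0 a1 a2 : ℂ)
    (hrel : n1 * n2 = 4)
    (hδ : piiiDelta n1 a0 a1 a2 ≠ 0)
    (U : Set ℂ) (hU : IsOpen U) (h0U : (0 : ℂ) ∉ U)
    (x y : ℂ → ℂ) (hx : ∀ t ∈ U, x t ≠ 0)
    (hxy : PIIISystem n1 n2 a0 a1 a2 U x y)
    (hδ' : piiiDelta n2 a1 a0 a2 ≠ 0) :
    PIIISystem n2 n1 a1 a0 a2 U
      (fun t => t / x t) (fun t => -(x t * (x t * y t + a2)) / t) := by
  obtain ⟨hxd, hyd, hsys⟩ := hxy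
  have hn1 : n1 ≠ 0 := by
    intro h; rw [h, zero_mul] at hrel; exact (by norm_num : (0:ℂ) ≠ 4) hrel
  have hUne : ∀ t ∈ U, t ≠ 0 := fun t ht h => h0U (h ▸ ht)
  refine ⟨differentiableOn_id.div hxd hx, ?_, ?_⟩
  · exact ((hxd.mul ((hxd.mul hyd).add_const a2)).neg).div differentiableOn_id hUne
  · intro t ht
    have ht0 := hUne t ht
    have hxt := hx t ht
    have hdx : HasDerivAt x (deriv x t) t :=
      (hxd.differentiableAt (hU.mem_nhds ht)).hasDerivAt
    have hdy : HasDerivAt y (deriv y t) t :=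
      (hyd.differentiableAt (hU.mem_nhds ht)).hasDerivAt
    obtain ⟨h1, h2⟩ := hsys t ht
    simp only [piiiDelta] at h1 h2
    have hX : deriv (fun s => s / x s) t
        = (1 * x t - t * deriv x t) / (x t) ^ 2 :=
      ((hasDerivAt_id t).div hdx hxt).deriv
    have hY : deriv (fun s => -(x s * (x s * y s + a2)) / s) t
        = (-(deriv x t * (x t * y t + a2) +
            x t * (deriv x t * y t + x t * deriv y t)) * t
            - -(x t * (x t * y t + a2)) * 1) / t ^ 2 :=
      (((hdx.mul ((hdx.mul hdy).add_const a2)).neg).div (hasDerivAt_id t) ht0).deriv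
    constructor
    · rw [hX]
      exact piii_aux1 n1 n2 a0 a1 a2 t (x t) (y t) (deriv x t) hn1 ht0 hxt hrel h1
    · rw [hY]
      exact piii_aux2 n1 n2 a0 a1 a2 t (x t) (y t) (deriv x t) (deriv y t)
        hn1 ht0 hxt hrel h1 h2
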